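/- Let x_1, ..., x_n be real numbers such that the sum of every subset of size greater than k (with 1 ≤ k ≤ n-1) is negative. Then the number of subsets S ⊆ {1,...,n} (including the empty set) with nonnegative sum is at most C(n-1,k-1) + C(n-1,k-2) + ... + C(n-1,0) + 1. -/

import Mathlib

open scoped Classical

open Finset

private lemma pascal_sum_aux (m k : ℕ) :
    ∑ i ∈ range (k+1), (m+1).choose i
      = ∑ i ∈ range (k+1), m.choose i + ∑ i ∈ range k, m.choose i := by
  induction k with
  | zero => simp
  | succ k ih =>
      rw [sum_range_succ, ih, Nat.choose_succ_succ, sum_range_succ (n := k+1),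
        sum_range_succ (n := k)]
      simp only [Nat.succ_eq_add_one]
      omega

private lemma aux_main {ι : Type*} [DecidableEq ι] :
    ∀ n : ℕ, ∀ k : ℕ, ∀ U : Finset ι, ∀ x : ι → ℝ,
      U.card = n + 1 → 1 ≤ k → k ≤ n →
      (∀ S ⊆ U, k < S.card → ∑ i ∈ S, x i < 0) →
      ((U.powerset.filter (fun S => 0 ≤ ∑ i ∈ S, x i)).card ≤
        (∑ i ∈ range k, n.choose i) + 1) := by
  intro n
  induction n using Nat.strong_induction_on with
  | _ n IH =>
    intro k U x hU hk1 hk2 h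
    have hsumU : ∑ i ∈ U, x i < 0 := h U (subset_refl U) (by omega)
    rcases eq_or_lt_of_le hk2 with hkn | hkn
    · -- k = n : complement pairing
      subst hkn
      set A := U.powerset.filter (fun S => 0 ≤ ∑ i ∈ S, x i) with hA
      set B := U.powerset.filter (fun S => ¬ (0 ≤ ∑ i ∈ S, x i)) with hB
      have hAB : A.card ≤ B.card := by
        apply card_le_card_of_injOn (fun S => U \ S)
        · intro S hS
          simp only [hA, mem_coe, mem_filter, mem_powerset] at hS
          simp only [hB, mem_coe, mem_filter, mem_powerset]
          refine ⟨sdiff_subset, ?_⟩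
          have := sum_sdiff (f := x) hS.1
          push_neg
          linarith [hS.2]
        · intro S₁ hS₁ S₂ hS₂ hEq
          simp only [hA, mem_coe, mem_filter, mem_powerset] at hS₁ hS₂
          have hEq' : U \ S₁ = U \ S₂ := hEq
          have e1 : U \ (U \ S₁) = S₁ := Finset.sdiff_sdiff_eq_self hS₁.1
          have e2 : U \ (U \ S₂) = S₂ := Finset.sdiff_sdiff_eq_self hS₂.1
          rw [← e1, ← e2, hEq']
      have hsum : A.card + B.card = 2 ^ (U.card) := by
        rw [← card_powerset]
        exact card_filter_add_card_filter_not _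
      rw [hU] at hsum
      have hbound : A.card ≤ 2 ^ k := by omega
      have hchoose : (∑ i ∈ range k, k.choose i) + 1 = 2 ^ k := by
        have := Nat.sum_range_choose k
        rw [sum_range_succ, Nat.choose_self] at this
        omega
      omega
    · -- k < n
      have hn2 : 2 ≤ n := by omega
      obtain ⟨m, rfl⟩ : ∃ m, n = m + 1 := ⟨n - 1, by omega⟩
      obtain ⟨j, rfl⟩ : ∃ j, k = j + 1 := ⟨k - 1, by omega⟩
      have hjm : j + 1 ≤ m := by omega
      have hUne : U.Nonempty := card_pos.mp (by omega)
      obtain ⟨t, htU, htmin⟩ := U.exists_min_image x hUne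
      have hxt : x t < 0 := by
        have h1 : U.card • x t ≤ ∑ i ∈ U, x i :=
          card_nsmul_le_sum U x (x t) (fun i hi => htmin i hi)
        by_contra hc
        push_neg at hc
        have h3 : (0:ℝ) ≤ U.card • x t := by
          rw [nsmul_eq_mul]
          positivity
        linarith
      set c : ℝ := -x t with hc
      have hcpos : 0 < c := by simp [hc]; linarith
      set U' := U.erase t with hU'
      have hU'card : U'.card = m + 1 := by
        rw [hU', card_erase_of_mem htU, hU]
        omega
      have hU'sub : U' ⊆ U := erase_subset t U
      have htU' : t ∉ U' := notMem_erase t U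
      -- key claim : subsets of U' of card > j have x-sum < c
      have claim0 : ∀ T ⊆ U', j < T.card → ∑ i ∈ T, x i < c := by
        intro T hT hcard
        have htT : t ∉ T := fun hmem => htU' (hT hmem)
        have hins : insert t T ⊆ U := insert_subset htU (hT.trans hU'sub)
        have hinscard : (insert t T).card = T.card + 1 := card_insert_of_notMem htT
        have := h (insert t T) hins (by omega)
        rw [sum_insert htT] at this
        simp only [hc]
        linarith
      set A := U.powerset.filter (fun S => 0 ≤ ∑ i ∈ S, x i) with hA
      have hsplit : (A.filter (fun S => t ∈ S)).card
          + (A.filter (fun S => t ∉ S)).card = A.card :=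
        card_filter_add_card_filter_not _
      -- bound the t-free part
      have hB : (A.filter (fun S => t ∉ S)).card ≤ (∑ i ∈ range (j+1), m.choose i) + 1 := by
        have hsub : A.filter (fun S => t ∉ S) ⊆
            U'.powerset.filter (fun S => 0 ≤ ∑ i ∈ S, x i) := by
          intro S hS
          simp only [hA, mem_filter, mem_powerset] at hS ⊢
          exact ⟨subset_erase.mpr ⟨hS.1.1, hS.2⟩, hS.1.2⟩
        calc (A.filter (fun S => t ∉ S)).card
            ≤ (U'.powerset.filter (fun S => 0 ≤ ∑ i ∈ S, x i)).card :=
              card_le_card hsub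
          _ ≤ (∑ i ∈ range (j+1), m.choose i) + 1 := by
              apply IH m (by omega) (j+1) U' x hU'card (by omega) (by omega)
              intro S hS hcard
              exact h S (hS.trans hU'sub) hcard
      -- bound the t-containing part
      set G := U'.powerset.filter (fun T => c ≤ ∑ i ∈ T, x i) with hG
      have hAG : (A.filter (fun S => t ∈ S)).card ≤ G.card := by
        apply card_le_card_of_injOn (fun S => S.erase t)
        · intro S hS
          simp only [hA, mem_coe, mem_filter, mem_powerset] at hS
          obtain ⟨⟨hSU, hSsum⟩, htS⟩ := hS
          simp only [hG, mem_coe, mem_filter, mem_powerset]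
          refine ⟨erase_subset_erase t hSU, ?_⟩
          have := Finset.sum_erase_add S x htS
          simp only [hc]
          linarith
        · intro S₁ hS₁ S₂ hS₂ hEq
          simp only [hA, mem_coe, mem_filter, mem_powerset] at hS₁ hS₂
          have hEq' : S₁.erase t = S₂.erase t := hEq
          have e1 : insert t (S₁.erase t) = S₁ := insert_erase hS₁.2
          have e2 : insert t (S₂.erase t) = S₂ := insert_erase hS₂.2
          rw [← e1, ← e2, hEq']
      have hGbound : G.card ≤ ∑ i ∈ range j, m.choose i := by
        rcases Nat.eq_zero_or_pos j with hj0 | hj1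
        · subst hj0
          have : G = ∅ := by
            rw [eq_empty_iff_forall_notMem]
            intro T hT
            simp only [hG, mem_filter, mem_powerset] at hT
            rcases Nat.eq_zero_or_pos T.card with h0 | h1
            · rw [card_eq_zero] at h0
              subst h0
              simp at hT
              linarith
            · have := claim0 T hT.1 (by omega)
              linarith [hT.2]
          simp [this]
        · -- threshold shift
          set z : ι → ℝ := fun i => x i - c / j with hz
          have hjR : (0:ℝ) < (j:ℝ) := by exact_mod_cast hj1
          have hsumz : ∀ T : Finset ι, ∑ i ∈ T, z i = ∑ i ∈ T, x i - T.card * (c / j) := by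
            intro T
            simp only [hz, sum_sub_distrib, sum_const, nsmul_eq_mul]
          have hzcond : ∀ T ⊆ U', j < T.card → ∑ i ∈ T, z i < 0 := by
            intro T hT hcard
            have h1 := claim0 T hT (by omega)
            rw [hsumz]
            have h2 : ((j:ℝ) + 1) * (c / j) ≤ (T.card : ℝ) * (c / j) := by
              apply mul_le_mul_of_nonneg_right _ (by positivity)
              have : (j:ℝ) + 1 ≤ (T.card : ℝ) := by exact_mod_cast hcard
              linarith
            have h3 : (j:ℝ) * (c / j) = c := by
              field_simp
            nlinarith
          have hins : insert ∅ G ⊆ U'.powerset.filter (fun T => 0 ≤ ∑ i ∈ T, z i) := by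
            intro T hT
            rcases mem_insert.mp hT with rfl | hTG
            · simp
            · simp only [hG, mem_filter, mem_powerset] at hTG
              simp only [mem_filter, mem_powerset]
              refine ⟨hTG.1, ?_⟩
              have hcard : T.card ≤ j := by
                by_contra hcc
                push_neg at hcc
                have := claim0 T hTG.1 hcc
                linarith [hTG.2]
              rw [hsumz]
              have h2 : (T.card : ℝ) * (c / j) ≤ (j:ℝ) * (c / j) := by
                apply mul_le_mul_of_nonneg_right _ (by positivity)
                exact_mod_cast hcard
              have h3 : (j:ℝ) * (c / j) = c := by field_simp
              linarith [hTG.2]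
          have hnotmem : (∅ : Finset ι) ∉ G := by
            simp only [hG, mem_filter, mem_powerset]
            intro hcon
            have := hcon.2
            simp at this
            linarith
          have hcardins : (insert ∅ G).card = G.card + 1 := card_insert_of_notMem hnotmem
          have hIH2 : (U'.powerset.filter (fun T => 0 ≤ ∑ i ∈ T, z i)).card ≤
              (∑ i ∈ range j, m.choose i) + 1 := by
            apply IH m (by omega) j U' z hU'card hj1 (by omega)
            intro S hS hcard
            exact hzcond S hS hcard
          have := card_le_card hins
          omega
      have hpascal := pascal_sum_aux m j
      omega

theorem stmt_0 (n k : ℕ) (hk1 : 1 ≤ k) (hk2 : k ≤ n - 1) (x : Fin n → ℝ)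
    (h : ∀ S : Finset (Fin n), k < S.card → ∑ i ∈ S, x i < 0) :
    (Finset.univ.filter (fun S : Finset (Fin n) => 0 ≤ ∑ i ∈ S, x i)).card ≤
      (∑ i ∈ Finset.range k, (n - 1).choose i) + 1 := by
  have hn : 2 ≤ n := by
    rcases n with _ | _ | n <;> omega
  have hcard : (Finset.univ : Finset (Fin n)).card = (n - 1) + 1 := by
    simp [Fintype.card_fin]
    omega
  have := aux_main (n - 1) k (Finset.univ : Finset (Fin n)) x hcard hk1 hk2
    (fun S _ hS => h S hS)
  rwa [Finset.powerset_univ] at this
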